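/- For n ∈ ℕ with n ∉ {1,2,3,4,6}, the set ℤ[ζₙ], viewed as a subset of ℂ ≅ ℝ², is dense in ℝ². -/

import Mathlib

open Polynomial Complex

/-- If `φ n ≤ 2` then `n ∈ {1,2,3,4,6}`. -/
lemma aux_totient_le_two (n : ℕ) (hn0 : n ≠ 0) (h : n.totient ≤ 2) :
    n ∈ ({1, 2, 3, 4, 6} : Set ℕ) := by
  have hφpos : 0 < n.totient := Nat.totient_pos.2 (Nat.pos_of_ne_zero hn0)
  have h12 : n ∣ 12 := by
    rw [Nat.dvd_iff_prime_pow_dvd_dvd]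
    intro p k hp hpk
    rcases Nat.eq_zero_or_pos k with rfl | hk
    · simp
    have hp' : p.Prime := hp
    have hdvd : (p ^ k).totient ∣ n.totient := Nat.totient_dvd_of_dvd hpk
    have hle : (p ^ k).totient ≤ 2 := le_trans (Nat.le_of_dvd hφpos hdvd) h
    rw [Nat.totient_prime_pow hp' hk] at hle
    have hp2 : 2 ≤ p := hp'.two_le
    have h1 : 1 ≤ p ^ (k - 1) := Nat.one_le_pow _ _ hp'.pos
    have hple : p ≤ 3 := by
      have h2' : p - 1 ≤ p ^ (k - 1) * (p - 1) := Nat.le_mul_of_pos_left _ (by omega)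
      omega
    interval_cases p
    · -- p = 2
      have h2 : 2 ^ (k - 1) ≤ 2 ^ 1 := by simpa using hle
      have hk2 : k ≤ 2 := by
        have := (Nat.pow_le_pow_iff_right (by norm_num : 1 < 2)).1 h2
        omega
      exact dvd_trans (pow_dvd_pow 2 hk2) (by norm_num)
    · -- p = 3
      have h3 : 3 ^ (k - 1) ≤ 1 := by omega
      have hk1 : k = 1 := by
        by_contra hne
        have : k - 1 ≠ 0 := by omega
        have := Nat.one_lt_pow this (by norm_num : 1 < 3)
        omega
      subst hk1
      norm_num
  have hle12 : n ≤ 12 := Nat.le_of_dvd (by norm_num) h12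
  have h1 : 1 ≤ n := Nat.one_le_iff_ne_zero.2 hn0
  interval_cases n <;>
    first
      | exact absurd h12 (by decide)
      | exact absurd h (by decide)
      | simp

theorem stmt7 (n : ℕ) (hn : n ∉ ({1, 2, 3, 4, 6} : Set ℕ)) (hn0 : n ≠ 0)
    (ζ : ℂ) (hζ : IsPrimitiveRoot ζ n) :
    Dense ((Algebra.adjoin ℤ ({ζ} : Set ℂ) : Subalgebra ℤ ℂ) : Set ℂ) := by
  set A := (Algebra.adjoin ℤ ({ζ} : Set ℂ)) with hA
  have hζA : ζ ∈ A := Algebra.self_mem_adjoin_singleton ℤ ζ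
  have hζn : ζ ^ n = 1 := hζ.pow_eq_one
  have hζ0 : ζ ≠ 0 := by
    intro h
    rw [h, zero_pow hn0] at hζn
    exact zero_ne_one hζn
  have habs : ‖ζ‖ = 1 := by
    have := hζ.norm'_eq_one hn0
    simpa using this
  have hconj : (starRingEnd ℂ) ζ = ζ⁻¹ := (Complex.inv_eq_conj habs).symm
  set α : ℝ := 2 * ζ.re with hα
  have hmul' : ζ * ζ ^ (n - 1) = 1 := by
    have hsucc : n - 1 + 1 = n := Nat.succ_pred_eq_of_pos (Nat.pos_of_ne_zero hn0)
    calc ζ * ζ ^ (n - 1) = ζ ^ (n - 1 + 1) := (pow_succ' ζ (n - 1)).symm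
      _ = 1 := by rw [hsucc]; exact hζn
  have hpow : ζ⁻¹ = ζ ^ (n - 1) := inv_eq_of_mul_eq_one_right hmul'
  have hαζ : (α : ℂ) = ζ + ζ ^ (n - 1) := by
    rw [← hpow, ← hconj, Complex.add_conj, hα]
  have hαA : (α : ℂ) ∈ A := by
    rw [hαζ]
    exact add_mem hζA (pow_mem hζA _)
  -- irrationality of α
  have hirr : Irrational α := by
    intro ⟨q, hq⟩
    have hq' : (q : ℂ) = (α : ℂ) := by
      exact_mod_cast congrArg Complex.ofReal hq
    have hroot : (Polynomial.aeval ζ) (X ^ 2 - Polynomial.C q * X + 1) = 0 := by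
      simp only [map_add, map_sub, map_mul, map_pow, aeval_X, aeval_C, map_one]
      rw [show (algebraMap ℚ ℂ) q = ((q : ℚ) : ℂ) from eq_ratCast _ q]
      have hαmul : (α : ℂ) * ζ = ζ ^ 2 + 1 := by
        rw [hαζ]
        linear_combination hmul'
      have hqC : ((q : ℚ) : ℂ) * ζ = ζ ^ 2 + 1 := by rw [hq']; exact hαmul
      push_cast at hqC ⊢
      linear_combination -hqC
    have hp0 : (X ^ 2 - Polynomial.C q * X + 1 : ℚ[X]) ≠ 0 := by
      intro h
      have := congrArg (Polynomial.natDegree) h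
      rw [Polynomial.natDegree_zero] at this
      have hdeg : (X ^ 2 - Polynomial.C q * X + 1 : ℚ[X]).natDegree = 2 := by
        compute_degree!
      omega
    have hdegle : (minpoly ℚ ζ).natDegree ≤ 2 := by
      have := minpoly.degree_le_of_ne_zero ℚ ζ hp0 hroot
      have hdeg : (X ^ 2 - Polynomial.C q * X + 1 : ℚ[X]).natDegree = 2 := by
        compute_degree!
      have h2 : (minpoly ℚ ζ).natDegree ≤ (X ^ 2 - Polynomial.C q * X + 1 : ℚ[X]).natDegree :=
        Polynomial.natDegree_le_natDegree this
      omega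
    have hmin : Polynomial.cyclotomic n ℚ = minpoly ℚ ζ :=
      Polynomial.cyclotomic_eq_minpoly_rat hζ (Nat.pos_of_ne_zero hn0)
    rw [← hmin, Polynomial.natDegree_cyclotomic] at hdegle
    exact hn (aux_totient_le_two n hn0 hdegle)
  -- the subgroup ℤ + ℤα is dense in ℝ
  set D : AddSubgroup ℝ := AddSubgroup.closure {1, α} with hD
  have hDdense : Dense (D : Set ℝ) := by
    rcases AddSubgroup.dense_or_cyclic D with h | ⟨a, ha⟩
    · exact h
    · exfalso
      have h1D : (1 : ℝ) ∈ D := AddSubgroup.subset_closure (by simp)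
      have hαD : α ∈ D := AddSubgroup.subset_closure (by simp)
      rw [ha] at h1D hαD
      rcases AddSubgroup.mem_closure_singleton.1 h1D with ⟨m, hm⟩
      rcases AddSubgroup.mem_closure_singleton.1 hαD with ⟨l, hl⟩
      have hm0 : m ≠ 0 := by
        intro h; rw [h] at hm; simp at hm
      have ha0 : a ≠ 0 := by
        intro h; rw [h] at hm; simp at hm
      apply hirr
      refine ⟨(l : ℚ) / (m : ℚ), ?_⟩
      have hm' : (m : ℝ) * a = 1 := by rw [← hm]; push_cast [zsmul_eq_mul]; ring
      have hl' : (l : ℝ) * a = α := by rw [← hl]; push_cast [zsmul_eq_mul]; ring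
      have hmr : (m : ℝ) ≠ 0 := Int.cast_ne_zero.2 hm0
      push_cast
      rw [div_eq_iff hmr]
      linear_combination (-(l : ℝ)) * hm' + (m : ℝ) * hl'
  -- members of D, cast to ℂ, belong to A
  have hDA : ∀ x ∈ D, (x : ℂ) ∈ A := by
    intro x hx
    induction hx using AddSubgroup.closure_induction with
    | mem y hy =>
      rcases hy with hy | hy
      · rw [hy]; push_cast; exact one_mem A
      · rw [hy]; exact hαA
    | zero => simp
    | add x y hx hy ihx ihy => push_cast; exact add_mem ihx ihy
    | neg x hx ihx => push_cast; exact neg_mem ihx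
  -- ζ.im ≠ 0
  have him : ζ.im ≠ 0 := by
    intro h
    have hconj' : (starRingEnd ℂ) ζ = ζ := Complex.conj_eq_iff_im.2 h
    have : ζ ^ 2 = 1 := by
      have : ζ⁻¹ = ζ := by rw [← hconj, hconj']
      have := mul_inv_cancel₀ hζ0
      rw [‹ζ⁻¹ = ζ›] at this
      rw [sq]; exact this
    have hdvd : n ∣ 2 := hζ.dvd_of_pow_eq_one 2 this
    have := Nat.le_of_dvd (by norm_num) hdvd
    interval_cases n <;> simp_all
  -- closure of A
  have hclosA : ∀ x : ℝ, (x : ℂ) ∈ closure (A : Set ℂ) := by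
    intro x
    have hx : x ∈ closure (D : Set ℝ) := hDdense x
    have himg : (Complex.ofReal '' closure (D : Set ℝ)) ⊆ closure (Complex.ofReal '' D) :=
      image_closure_subset_closure_image Complex.continuous_ofReal
    have : (x : ℂ) ∈ closure (Complex.ofReal '' D) := himg ⟨x, hx, rfl⟩
    refine closure_mono ?_ this
    rintro _ ⟨y, hy, rfl⟩
    exact hDA y hy
  have hclosζA : ∀ x : ℝ, ζ * (x : ℂ) ∈ closure (A : Set ℂ) := by
    intro x
    have hmap : (fun z : ℂ => ζ * z) '' closure (A : Set ℂ) ⊆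
        closure ((fun z : ℂ => ζ * z) '' (A : Set ℂ)) :=
      image_closure_subset_closure_image (continuous_const.mul continuous_id)
    have h1 : ζ * (x : ℂ) ∈ closure ((fun z : ℂ => ζ * z) '' (A : Set ℂ)) :=
      hmap ⟨(x : ℂ), hclosA x, rfl⟩
    refine closure_mono ?_ h1
    rintro _ ⟨y, hy, rfl⟩
    exact mul_mem hζA hy
  -- closure is closed under addition
  have hadd : ∀ z w : ℂ, z ∈ closure (A : Set ℂ) → w ∈ closure (A : Set ℂ) →
      z + w ∈ closure (A : Set ℂ) := by
    intro z w hz hw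
    have : closure (A : Set ℂ) = (A.toSubring.toAddSubgroup.topologicalClosure : Set ℂ) := rfl
    rw [this] at hz hw ⊢
    exact add_mem hz hw
  intro z
  have hdecomp : z = ((z.re - z.im / ζ.im * ζ.re : ℝ) : ℂ) + ζ * ((z.im / ζ.im : ℝ) : ℂ) := by
    apply Complex.ext <;> simp [Complex.add_re, Complex.add_im, Complex.mul_re, Complex.mul_im] <;>
      field_simp <;> ring
  rw [show closure (A : Set ℂ) = closure (A : Set ℂ) from rfl]
  rw [hdecomp]
  exact hadd _ _ (hclosA _) (hclosζA _)
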